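/- Let Q₁, Q₀, R₁, R₀ : U × (ℝ^d ∖ {0}) → ℂ^{d×d} be smooth matrix-valued functions. Define the two leading components of the composed symbol by C₁ := Q₁ R₁ (pointwise matrix product) and C₀ := Q₁ R₀ + Q₀ R₁ − i Σ_γ (∂Q₁/∂ξ_γ)(∂R₁/∂x^γ). Then, pointwise on U × (ℝ^d ∖ {0}), Sub(C₁, C₀) = Q₁ · Sub(R₁, R₀) + Sub(Q₁, Q₀) · R₁ + (i/2) {{Q₁, R₁}}. (This is the composition formula for subprincipal symbols of pseudodifferential operators acting on 1-forms, Theorem 3.6 of the paper, expressed at the level of the two leading symbol components.) -/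

import Mathlib

noncomputable section

lemma smoothAt_pd {E : Type*} [NormedAddCommGroup E] [NormedSpace ℝ E]
    {f : E → ℂ} {p : E} (hf : ContDiffAt ℝ ((⊤ : ℕ∞) : WithTop ℕ∞) f p) (v : E) :
    ContDiffAt ℝ ((⊤ : ℕ∞) : WithTop ℕ∞) (fun q => fderiv ℝ f q v) p :=
  (hf.fderiv_right (by exact_mod_cast le_top)).clm_apply contDiffAt_const

lemma pd_sum_mul {E : Type*} [NormedAddCommGroup E] [NormedSpace ℝ E]
    {ι : Type*} [Fintype ι] {f g : ι → E → ℂ} {p : E}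
    (hf : ∀ κ, DifferentiableAt ℝ (f κ) p) (hg : ∀ κ, DifferentiableAt ℝ (g κ) p) (v : E) :
    fderiv ℝ (fun q => ∑ κ, f κ q * g κ q) p v
      = ∑ κ, (fderiv ℝ (f κ) p v * g κ p + f κ p * fderiv ℝ (g κ) p v) := by
  rw [fderiv_fun_sum (A := fun κ q => f κ q * g κ q) fun κ _ => (hf κ).mul (hg κ), ContinuousLinearMap.sum_apply]
  refine Finset.sum_congr rfl fun κ _ => ?_
  rw [fderiv_fun_mul (hf κ) (hg κ)]
  simp [smul_eq_mul]
  ring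

lemma pd_sum_mul₂ {E : Type*} [NormedAddCommGroup E] [NormedSpace ℝ E]
    {ι : Type*} [Fintype ι] {f g h k : ι → E → ℂ} {p : E}
    (hf : ∀ κ, DifferentiableAt ℝ (f κ) p) (hg : ∀ κ, DifferentiableAt ℝ (g κ) p)
    (hh : ∀ κ, DifferentiableAt ℝ (h κ) p) (hk : ∀ κ, DifferentiableAt ℝ (k κ) p) (v : E) :
    fderiv ℝ (fun q => ∑ κ, (f κ q * g κ q + h κ q * k κ q)) p v
      = ∑ κ, ((fderiv ℝ (f κ) p v * g κ p + f κ p * fderiv ℝ (g κ) p v)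
          + (fderiv ℝ (h κ) p v * k κ p + h κ p * fderiv ℝ (k κ) p v)) := by
  rw [fderiv_fun_sum (A := fun κ q => f κ q * g κ q + h κ q * k κ q) fun κ _ => ((hf κ).mul (hg κ)).add ((hh κ).mul (hk κ)),
    ContinuousLinearMap.sum_apply]
  refine Finset.sum_congr rfl fun κ _ => ?_
  rw [fderiv_fun_add (f := fun q => f κ q * g κ q) (g := fun q => h κ q * k κ q) ((hf κ).mul (hg κ)) ((hh κ).mul (hk κ)), ContinuousLinearMap.add_apply,
    fderiv_fun_mul (hf κ) (hg κ), fderiv_fun_mul (hh κ) (hk κ)]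
  simp [smul_eq_mul]
  ring

lemma alg {d : ℕ} (q r q0 r0 : Fin d → Fin d → ℂ)
    (qx qξ rx rξ qm rm : Fin d → Fin d → Fin d → ℂ)
    (G : Fin d → Fin d → Fin d → ℂ) (μ ν : Fin d) :
    ∑ j, q μ j * r0 j ν + ∑ j, q0 μ j * r j ν
        + -Complex.I * ∑ γ, ∑ κ, qξ γ μ κ * rx γ κ ν
        + Complex.I / 2 * ∑ x, ∑ κ,
            (qm x μ κ * r κ ν + qξ x μ κ * rx x κ ν
              + (qx x μ κ * rξ x κ ν + q μ κ * rm x κ ν))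
        + Complex.I / 2 * ∑ x,
            ((∑ α, G α x α) * ∑ κ, (qξ x μ κ * r κ ν + q μ κ * rξ x κ ν)
              - ∑ b, G b x μ * ∑ κ, (qξ x b κ * r κ ν + q b κ * rξ x κ ν)
              - ∑ b, G ν x b * ∑ κ, (qξ x μ κ * r κ b + q μ κ * rξ x κ b))
      = ∑ x, q μ x *
            (r0 x ν + Complex.I / 2 * ∑ γ, rm γ x ν
              + Complex.I / 2 * ∑ γ,
                  ((∑ α, G α γ α) * rξ γ x ν - ∑ α, G α γ x * rξ γ α ν
                    - ∑ α, G ν γ α * rξ γ x α))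
        + ∑ x, (q0 μ x + Complex.I / 2 * ∑ γ, qm γ μ x
              + Complex.I / 2 * ∑ γ,
                  ((∑ α, G α γ α) * qξ γ μ x - ∑ α, G α γ μ * qξ γ α x
                    - ∑ α, G x γ α * qξ γ μ α)) * r x ν
        + Complex.I / 2 *
            (∑ γ, ∑ κ,
                (qx γ μ κ - ∑ a, G a γ μ * q a κ + ∑ b, G κ γ b * q μ b) * rξ γ κ ν
              - ∑ γ, ∑ κ, qξ γ μ κ *
                  (rx γ κ ν - ∑ a, G a γ κ * r a ν + ∑ b, G ν γ b * r κ b)) := by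
  have swap2 : ∀ f : Fin d → Fin d → ℂ, ∑ a, ∑ b, f a b = ∑ b, ∑ a, f a b :=
    fun f => Finset.sum_comm
  have swap12 : ∀ f : Fin d → Fin d → Fin d → ℂ,
      ∑ a, ∑ b, ∑ e, f a b e = ∑ b, ∑ a, ∑ e, f a b e := fun f => Finset.sum_comm
  have swap23 : ∀ f : Fin d → Fin d → Fin d → ℂ,
      ∑ a, ∑ b, ∑ e, f a b e = ∑ a, ∑ e, ∑ b, f a b e :=
    fun f => Finset.sum_congr rfl fun a _ => Finset.sum_comm
  simp only [mul_add, add_mul, mul_sub, sub_mul, Finset.mul_sum, Finset.sum_mul,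
    Finset.sum_add_distrib, Finset.sum_sub_distrib, mul_assoc]
  have h1 : ∑ x : Fin d, ∑ i : Fin d, q μ x * (Complex.I / 2 * rm i x ν)
      = ∑ x : Fin d, ∑ i : Fin d, Complex.I / 2 * (q μ i * rm x i ν) :=
    (swap2 _).trans (Finset.sum_congr rfl fun a _ => Finset.sum_congr rfl fun b _ => by ring)
  have h2 : ∑ x : Fin d, ∑ x_1 : Fin d, ∑ i : Fin d,
        q μ x * (Complex.I / 2 * (G i x_1 i * rξ x_1 x ν))
      = ∑ x : Fin d, ∑ x_1 : Fin d, ∑ i : Fin d,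
        Complex.I / 2 * (G i x i * (q μ x_1 * rξ x x_1 ν)) :=
    (swap12 _).trans (Finset.sum_congr rfl fun a _ => Finset.sum_congr rfl fun b _ =>
      Finset.sum_congr rfl fun e _ => by ring)
  have h3 : ∑ x : Fin d, ∑ x_1 : Fin d, ∑ i : Fin d,
        q μ x * (Complex.I / 2 * (G ν x_1 i * rξ x_1 x i))
      = ∑ x : Fin d, ∑ x_1 : Fin d, ∑ i : Fin d,
        Complex.I / 2 * (G ν x x_1 * (q μ i * rξ x i x_1)) :=
    (swap12 _).trans ((swap23 _).trans (Finset.sum_congr rfl fun a _ =>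
      Finset.sum_congr rfl fun b _ => Finset.sum_congr rfl fun e _ => by ring))
  have h4 : ∑ x : Fin d, ∑ x_1 : Fin d, Complex.I / 2 * (qm x_1 μ x * r x ν)
      = ∑ x : Fin d, ∑ i : Fin d, Complex.I / 2 * (qm x μ i * r i ν) :=
    (swap2 _).trans (Finset.sum_congr rfl fun a _ => Finset.sum_congr rfl fun b _ => by ring)
  have h5 : ∑ x : Fin d, ∑ x_1 : Fin d, ∑ x_2 : Fin d,
        Complex.I / 2 * (G x_2 x_1 x_2 * (qξ x_1 μ x * r x ν))
      = ∑ x : Fin d, ∑ x_1 : Fin d, ∑ i : Fin d,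
        Complex.I / 2 * (G i x i * (qξ x μ x_1 * r x_1 ν)) :=
    (swap12 _).trans (Finset.sum_congr rfl fun a _ => Finset.sum_congr rfl fun b _ =>
      Finset.sum_congr rfl fun e _ => by ring)
  have h6 : ∑ x : Fin d, ∑ x_1 : Fin d, ∑ x_2 : Fin d,
        Complex.I / 2 * (G x_2 x_1 μ * (qξ x_1 x_2 x * r x ν))
      = ∑ x : Fin d, ∑ x_1 : Fin d, ∑ i : Fin d,
        Complex.I / 2 * (G x_1 x μ * (qξ x x_1 i * r i ν)) :=
    (swap12 _).trans ((swap23 _).trans (Finset.sum_congr rfl fun a _ =>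
      Finset.sum_congr rfl fun b _ => Finset.sum_congr rfl fun e _ => by ring))
  have h7 : ∑ x : Fin d, ∑ x_1 : Fin d, ∑ i : Fin d,
        Complex.I / 2 * (G i x μ * (q i x_1 * rξ x x_1 ν))
      = ∑ x : Fin d, ∑ x_1 : Fin d, ∑ i : Fin d,
        Complex.I / 2 * (G x_1 x μ * (q x_1 i * rξ x i ν)) :=
    Finset.sum_congr rfl fun a _ => (swap2 _).trans (Finset.sum_congr rfl fun b _ =>
      Finset.sum_congr rfl fun e _ => by ring)
  have h8 : ∑ x : Fin d, ∑ x_1 : Fin d, ∑ i : Fin d,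
        Complex.I / 2 * (G x_1 x i * (q μ i * rξ x x_1 ν))
      = ∑ x : Fin d, ∑ x_1 : Fin d, ∑ i : Fin d,
        q μ x * (Complex.I / 2 * (G i x_1 x * rξ x_1 i ν)) :=
    (Finset.sum_congr rfl fun a (_ : a ∈ Finset.univ) => (Finset.sum_comm :
        ∑ b : Fin d, ∑ e : Fin d, Complex.I / 2 * (G b a e * (q μ e * rξ a b ν))
          = ∑ e : Fin d, ∑ b : Fin d, Complex.I / 2 * (G b a e * (q μ e * rξ a b ν)))).trans
      ((swap12 _).trans (Finset.sum_congr rfl fun a _ => Finset.sum_congr rfl fun b _ =>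
        Finset.sum_congr rfl fun e _ => by ring))
  have h9 : ∑ x : Fin d, ∑ x_1 : Fin d, ∑ i : Fin d,
        Complex.I / 2 * (qξ x μ x_1 * (G i x x_1 * r i ν))
      = ∑ x : Fin d, ∑ x_1 : Fin d, ∑ x_2 : Fin d,
        Complex.I / 2 * (G x x_1 x_2 * (qξ x_1 μ x_2 * r x ν)) :=
    (Finset.sum_congr rfl fun a (_ : a ∈ Finset.univ) => (Finset.sum_comm :
        ∑ b : Fin d, ∑ e : Fin d, Complex.I / 2 * (qξ a μ b * (G e a b * r e ν))
          = ∑ e : Fin d, ∑ b : Fin d, Complex.I / 2 * (qξ a μ b * (G e a b * r e ν)))).trans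
      ((swap12 _).trans (Finset.sum_congr rfl fun a _ => Finset.sum_congr rfl fun b _ =>
        Finset.sum_congr rfl fun e _ => by ring))
  have h10 : ∑ x : Fin d, ∑ x_1 : Fin d, ∑ i : Fin d,
        Complex.I / 2 * (qξ x μ x_1 * (G ν x i * r x_1 i))
      = ∑ x : Fin d, ∑ x_1 : Fin d, ∑ i : Fin d,
        Complex.I / 2 * (G ν x x_1 * (qξ x μ i * r i x_1)) :=
    (swap23 _).trans (Finset.sum_congr rfl fun a _ => Finset.sum_congr rfl fun b _ =>
      Finset.sum_congr rfl fun e _ => by ring)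
  have h11 : ∑ x : Fin d, ∑ i : Fin d, -Complex.I * (qξ x μ i * rx x i ν)
      = (-2 : ℂ) * ∑ x : Fin d, ∑ i : Fin d, Complex.I / 2 * (qξ x μ i * rx x i ν) := by
    simp only [Finset.mul_sum]
    exact Finset.sum_congr rfl fun a _ => Finset.sum_congr rfl fun b _ => by ring
  rw [h1, h2, h3, h4, h5, h6, h7, h8, h9, h10, h11]
  ring



/-- Partial derivative in the base variable: `∂f/∂x^γ` at `p = (x, ξ)`. -/
def pdx {d : ℕ} (γ : Fin d) (f : (Fin d → ℝ) × (Fin d → ℝ) → ℂ)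
    (p : (Fin d → ℝ) × (Fin d → ℝ)) : ℂ :=
  fderiv ℝ f p (Pi.single γ 1, 0)

/-- Partial derivative in the momentum variable: `∂f/∂ξ_γ` at `p = (x, ξ)`. -/
def pdxi {d : ℕ} (γ : Fin d) (f : (Fin d → ℝ) × (Fin d → ℝ) → ℂ)
    (p : (Fin d → ℝ) × (Fin d → ℝ)) : ℂ :=
  fderiv ℝ f p (0, Pi.single γ 1)

/-- Partial derivative `∂f/∂x^β` of a scalar function on `ℝ^d`. -/
def pdX {d : ℕ} (β : Fin d) (f : (Fin d → ℝ) → ℝ) (x : Fin d → ℝ) : ℝ :=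
  fderiv ℝ f x (Pi.single β 1)

/-- The Christoffel symbols
`Γ^α{}_{βγ} := (1/2) Σ_δ g^{αδ}(∂_β g_{δγ} + ∂_γ g_{δβ} − ∂_δ g_{βγ})`. -/
def christoffel {d : ℕ} (g : (Fin d → ℝ) → Fin d → Fin d → ℝ) (α β γ : Fin d)
    (x : Fin d → ℝ) : ℝ :=
  (1 / 2) * ∑ δ, (Matrix.of (g x))⁻¹ α δ *
    (pdX β (fun y => g y δ γ) x + pdX γ (fun y => g y δ β) x - pdX δ (fun y => g y β γ) x)

/-- The subprincipal symbol `Sub(P₁,P₀)` of a pseudodifferential operator acting on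
1-forms with two leading symbol components `P₁, P₀` (formula (3.5) of the paper). -/
def subSymb {d : ℕ} (g : (Fin d → ℝ) → Fin d → Fin d → ℝ)
    (P₁ P₀ : (Fin d → ℝ) × (Fin d → ℝ) → Matrix (Fin d) (Fin d) ℂ)
    (p : (Fin d → ℝ) × (Fin d → ℝ)) (μ ν : Fin d) : ℂ :=
  P₀ p μ ν
    + Complex.I / 2 * ∑ γ, pdx γ (fun q => pdxi γ (fun r => P₁ r μ ν) q) p
    + Complex.I / 2 * ∑ γ,
        ((∑ α, (christoffel g α γ α p.1 : ℂ)) * pdxi γ (fun q => P₁ q μ ν) p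
          - (∑ α, (christoffel g α γ μ p.1 : ℂ) * pdxi γ (fun q => P₁ q α ν) p)
          - ∑ α, (christoffel g ν γ α p.1 : ℂ) * pdxi γ (fun q => P₁ q μ α) p)

/-- The generalised Poisson bracket `{{Q, R}}` (formula (3.12) of the paper). -/
def genPoisson {d : ℕ} (g : (Fin d → ℝ) → Fin d → Fin d → ℝ)
    (Q R : (Fin d → ℝ) × (Fin d → ℝ) → Matrix (Fin d) (Fin d) ℂ)
    (p : (Fin d → ℝ) × (Fin d → ℝ)) (α β : Fin d) : ℂ :=
  (∑ γ, ∑ κ,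
      (pdx γ (fun q => Q q α κ) p
          - (∑ α', (christoffel g α' γ α p.1 : ℂ) * Q p α' κ)
          + ∑ κ', (christoffel g κ γ κ' p.1 : ℂ) * Q p α κ') *
        pdxi γ (fun q => R q κ β) p)
    - ∑ γ, ∑ κ, pdxi γ (fun q => Q q α κ) p *
        (pdx γ (fun q => R q κ β) p
          - (∑ κ', (christoffel g κ' γ κ p.1 : ℂ) * R p κ' β)
          + ∑ β', (christoffel g β γ β' p.1 : ℂ) * R p κ β')

/-- **Theorem 3.6 of the paper** (composition formula for subprincipal symbols of
pseudodifferential operators acting on 1-forms, at the level of the two leading symbol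
components): with `C₁ := Q₁R₁` and
`C₀ := Q₁R₀ + Q₀R₁ − i Σ_γ (∂Q₁/∂ξ_γ)(∂R₁/∂x^γ)`, one has
`Sub(C₁,C₀) = Q₁ Sub(R₁,R₀) + Sub(Q₁,Q₀) R₁ + (i/2) {{Q₁,R₁}}` pointwise on
`U × (ℝ^d ∖ {0})`. -/
theorem subprincipal_symbol_of_composition {d : ℕ} (hd : 1 ≤ d)
    (U : Set (Fin d → ℝ)) (hU : IsOpen U)
    (g : (Fin d → ℝ) → Fin d → Fin d → ℝ)
    (hg : ∀ α β, ContDiffOn ℝ (⊤ : ℕ∞) (fun x => g x α β) U)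
    (hgsym : ∀ x ∈ U, ∀ α β, g x α β = g x β α)
    (hgpos : ∀ x ∈ U, (Matrix.of (g x)).PosDef)
    (Q₁ Q₀ R₁ R₀ : (Fin d → ℝ) × (Fin d → ℝ) → Matrix (Fin d) (Fin d) ℂ)
    (hQ₁ : ∀ μ ν, ContDiffOn ℝ (⊤ : ℕ∞) (fun p => Q₁ p μ ν)
      (U ×ˢ {ξ : Fin d → ℝ | ξ ≠ 0}))
    (hQ₀ : ∀ μ ν, ContDiffOn ℝ (⊤ : ℕ∞) (fun p => Q₀ p μ ν)
      (U ×ˢ {ξ : Fin d → ℝ | ξ ≠ 0}))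
    (hR₁ : ∀ μ ν, ContDiffOn ℝ (⊤ : ℕ∞) (fun p => R₁ p μ ν)
      (U ×ˢ {ξ : Fin d → ℝ | ξ ≠ 0}))
    (hR₀ : ∀ μ ν, ContDiffOn ℝ (⊤ : ℕ∞) (fun p => R₀ p μ ν)
      (U ×ˢ {ξ : Fin d → ℝ | ξ ≠ 0})) :
    ∀ p ∈ U ×ˢ {ξ : Fin d → ℝ | ξ ≠ 0}, ∀ μ ν : Fin d,
      subSymb g (fun q => Q₁ q * R₁ q)
        (fun q => Q₁ q * R₀ q + Q₀ q * R₁ q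
          + Matrix.of fun μ' ν' => -Complex.I * ∑ γ, ∑ κ,
              pdxi γ (fun r => Q₁ r μ' κ) q * pdx γ (fun r => R₁ r κ ν') q)
        p μ ν
      = (∑ κ, Q₁ p μ κ * subSymb g R₁ R₀ p κ ν)
        + (∑ κ, subSymb g Q₁ Q₀ p μ κ * R₁ p κ ν)
        + Complex.I / 2 * genPoisson g Q₁ R₁ p μ ν := by
  intro p hp μ ν
  have hS : IsOpen (U ×ˢ {ξ : Fin d → ℝ | ξ ≠ 0}) := hU.prod isOpen_ne
  set S := U ×ˢ {ξ : Fin d → ℝ | ξ ≠ 0} with hSdef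
  have hQd : ∀ q ∈ S, ∀ a b : Fin d, DifferentiableAt ℝ (fun r => Q₁ r a b) q :=
    fun q hq a b => ((hQ₁ a b).contDiffAt (hS.mem_nhds hq)).differentiableAt (by simp)
  have hRd : ∀ q ∈ S, ∀ a b : Fin d, DifferentiableAt ℝ (fun r => R₁ r a b) q :=
    fun q hq a b => ((hR₁ a b).contDiffAt (hS.mem_nhds hq)).differentiableAt (by simp)
  have hA : ∀ q ∈ S, ∀ (γ a b : Fin d),
      pdxi γ (fun r => ∑ κ, Q₁ r a κ * R₁ r κ b) q
        = ∑ κ, (pdxi γ (fun r => Q₁ r a κ) q * R₁ q κ b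
            + Q₁ q a κ * pdxi γ (fun r => R₁ r κ b) q) := by
    intro q hq γ a b
    simp only [pdxi]
    exact pd_sum_mul (fun κ => hQd q hq a κ) (fun κ => hRd q hq κ b) _
  have hA' : ∀ (γ a b : Fin d),
      pdxi γ (fun r => ∑ κ, Q₁ r a κ * R₁ r κ b) p
        = ∑ κ, (pdxi γ (fun r => Q₁ r a κ) p * R₁ p κ b
            + Q₁ p a κ * pdxi γ (fun r => R₁ r κ b) p) := fun γ a b => hA p hp γ a b
  have hQxid : ∀ (γ a b : Fin d),
      DifferentiableAt ℝ (fun q => pdxi γ (fun r => Q₁ r a b) q) p := by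
    intro γ a b
    have := (smoothAt_pd ((hQ₁ a b).contDiffAt (hS.mem_nhds hp))
      ((0 : Fin d → ℝ), Pi.single γ 1)).differentiableAt (by simp)
    simpa [pdxi] using this
  have hRxid : ∀ (γ a b : Fin d),
      DifferentiableAt ℝ (fun q => pdxi γ (fun r => R₁ r a b) q) p := by
    intro γ a b
    have := (smoothAt_pd ((hR₁ a b).contDiffAt (hS.mem_nhds hp))
      ((0 : Fin d → ℝ), Pi.single γ 1)).differentiableAt (by simp)
    simpa [pdxi] using this
  have hB : ∀ γ : Fin d,
      pdx γ (fun q => pdxi γ (fun r => ∑ κ, Q₁ r μ κ * R₁ r κ ν) q) p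
        = ∑ κ, ((pdx γ (fun q => pdxi γ (fun r => Q₁ r μ κ) q) p * R₁ p κ ν
              + pdxi γ (fun r => Q₁ r μ κ) p * pdx γ (fun r => R₁ r κ ν) p)
            + (pdx γ (fun r => Q₁ r μ κ) p * pdxi γ (fun r => R₁ r κ ν) p
              + Q₁ p μ κ * pdx γ (fun q => pdxi γ (fun r => R₁ r κ ν) q) p)) := by
    intro γ
    have hev : (fun q => pdxi γ (fun r => ∑ κ, Q₁ r μ κ * R₁ r κ ν) q)
        =ᶠ[nhds p] fun q => ∑ κ, (pdxi γ (fun r => Q₁ r μ κ) q * R₁ q κ ν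
            + Q₁ q μ κ * pdxi γ (fun r => R₁ r κ ν) q) :=
      Filter.eventually_of_mem (hS.mem_nhds hp) (fun q hq => hA q hq γ μ ν)
    simp only [pdx]
    rw [hev.fderiv_eq]
    exact pd_sum_mul₂ (f := fun κ q => pdxi γ (fun r => Q₁ r μ κ) q)
      (g := fun κ q => R₁ q κ ν) (h := fun κ q => Q₁ q μ κ)
      (k := fun κ q => pdxi γ (fun r => R₁ r κ ν) q)
      (fun κ => hQxid γ μ κ) (fun κ => hRd p hp κ ν)
      (fun κ => hQd p hp μ κ) (fun κ => hRxid γ κ ν) _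
  simp only [subSymb, genPoisson, Matrix.add_apply, Matrix.mul_apply, Matrix.of_apply,
    hA', hB]
  exact alg (fun a b => Q₁ p a b) (fun a b => R₁ p a b) (fun a b => Q₀ p a b)
    (fun a b => R₀ p a b)
    (fun γ a b => pdx γ (fun s => Q₁ s a b) p)
    (fun γ a b => pdxi γ (fun s => Q₁ s a b) p)
    (fun γ a b => pdx γ (fun s => R₁ s a b) p)
    (fun γ a b => pdxi γ (fun s => R₁ s a b) p)
    (fun γ a b => pdx γ (fun w => pdxi γ (fun s => Q₁ s a b) w) p)
    (fun γ a b => pdx γ (fun w => pdxi γ (fun s => R₁ s a b) w) p)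
    (fun a b e => ((christoffel g a b e p.1 : ℝ) : ℂ)) μ ν
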